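/- Let O be a complete DVR with uniformizer ϖ and residue field F, and let V be a group scheme situation abstracted as follows: let 1 → Z → V → V^{ad} → 1 be a central extension of groups with continuous action of a profinite group G, where Z is abelian. Suppose H²(G, Z(F̄_p)) = 0 and H¹(G, Z(Z̄_p)) surjects onto H¹(G, Z(F̄_p)) (reduction is surjective on H¹ of the center), and H²(G, Z(Z̄_p)) = 0. If c̄ ∈ H¹(G, V(F̄_p)) is a non-abelian cohomology class whose image ad(c̄) ∈ H¹(G, V^{ad}(F̄_p)) lifts to H¹(G, V^{ad}(Z̄_p)), then c̄ itself lifts to H¹(G, V(Z̄_p)). -/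
import Mathlib


section Defs

variable {G B : Type*} [Group G] [Group B] [MulDistribMulAction G B]

/-- A (possibly non-abelian) 1-cocycle of `G` valued in `B`. -/
def IsCocycle (c : G → B) : Prop := ∀ g h : G, c (g * h) = c g * g • c h

/-- Cohomologous 1-cocycles (twisted conjugation). -/
def Cohomologous (c c' : G → B) : Prop := ∃ b : B, ∀ g : G, c' g = b⁻¹ * c g * g • b

/-- A 2-cocycle of `G` valued in `B` (used for abelian `B`). -/
def Is2Cocycle (f : G → G → B) : Prop :=
  ∀ g h j : G, g • f h j * f g (h * j) = f (g * h) j * f g h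

/-- A 2-coboundary of `G` valued in `B`. -/
def Is2Coboundary (f : G → G → B) : Prop :=
  ∃ u : G → B, ∀ g h : G, f g h = u g * g • u h * (u (g * h))⁻¹

end Defs

section Aux

variable {G B C : Type*} [Group G] [Group B] [Group C]
  [MulDistribMulAction G B] [MulDistribMulAction G C]

lemma aux_twist_cocycle {c : G → B} (hc : IsCocycle c) (b : B) :
    IsCocycle (fun g => b⁻¹ * c g * g • b) := by
  intro g h
  simp only [hc g h, smul_mul', smul_inv', mul_smul]
  group

lemma aux_map_cocycle (φ : B →* C) (hφ : ∀ (g : G) (x : B), φ (g • x) = g • φ x)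
    {c : G → B} (hc : IsCocycle c) : IsCocycle (fun g => φ (c g)) := by
  intro g h
  simp [hc g h, hφ]

end Aux

section Central

variable {G Z V : Type*} [Group G] [CommGroup Z] [Group V]
  [MulDistribMulAction G Z] [MulDistribMulAction G V]

/-- The 2-cocycle attached to a set-theoretic lift through a central extension. -/
lemma aux_central_2cocycle (ι : Z →* V) (hinj : Function.Injective ι)
    (hcen : ∀ (z : Z) (x : V), ι z * x = x * ι z)
    (hsmul : ∀ (g : G) (z : Z), ι (g • z) = g • ι z)
    (v : G → V) (f : G → G → Z)
    (hv : ∀ g h : G, v g * g • v h = ι (f g h) * v (g * h)) :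
    Is2Cocycle f := by
  intro g h j
  apply hinj
  apply mul_right_cancel (b := v (g * (h * j)))
  have e1 : v (h * j) = (ι (f h j))⁻¹ * (v h * h • v j) := by
    rw [hv h j]; group
  calc ι (g • f h j * f g (h * j)) * v (g * (h * j))
      = ι (g • f h j) * (ι (f g (h * j)) * v (g * (h * j))) := by
        rw [map_mul, mul_assoc]
    _ = ι (g • f h j) * (v g * g • v (h * j)) := by rw [← hv g (h * j)]
    _ = ι (g • f h j) * (v g * ((ι (g • f h j))⁻¹ * (g • v h * (g * h) • v j))) := by
        rw [e1, smul_mul', smul_inv', hsmul, smul_mul', smul_smul]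
    _ = ι (g • f h j) * ((ι (g • f h j))⁻¹ * (v g * (g • v h * (g * h) • v j))) := by
        rw [← mul_assoc (v g), ← map_inv, ← hcen, map_inv, mul_assoc]
    _ = v g * g • v h * (g * h) • v j := by
        rw [← mul_assoc, mul_inv_cancel, one_mul, mul_assoc]
    _ = ι (f g h) * (v (g * h) * (g * h) • v j) := by
        rw [← mul_assoc, hv g h, mul_assoc]
    _ = ι (f g h) * (ι (f (g * h) j) * v (g * h * j)) := by rw [← hv (g * h) j]
    _ = ι (f (g * h) j * f g h) * v (g * (h * j)) := by
        rw [map_mul, ← mul_assoc g h j, hcen (f (g * h) j) (ι (f g h)), mul_assoc]; rw [← mul_assoc]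

/-- Correcting a set-theoretic lift by a primitive of its 2-cocycle gives a cocycle. -/
lemma aux_central_correct (ι : Z →* V)
    (hcen : ∀ (z : Z) (x : V), ι z * x = x * ι z)
    (hsmul : ∀ (g : G) (z : Z), ι (g • z) = g • ι z)
    (v : G → V) (f : G → G → Z) (u : G → Z)
    (hv : ∀ g h : G, v g * g • v h = ι (f g h) * v (g * h))
    (hu : ∀ g h : G, f g h = u g * g • u h * (u (g * h))⁻¹) :
    IsCocycle (fun g => (ι (u g))⁻¹ * v g) := by
  have hcen' : ∀ (z : Z) (x : V), (ι z)⁻¹ * x = x * (ι z)⁻¹ := by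
    intro z x; rw [← map_inv]; exact hcen _ _
  intro g h
  have e1 : v (g * h) = (ι (f g h))⁻¹ * (v g * g • v h) := by rw [hv g h]; group
  have e2 : (u (g * h))⁻¹ = (g • u h)⁻¹ * (u g)⁻¹ * f g h := by
    have : u (g * h) = (f g h)⁻¹ * (u g * g • u h) := by rw [hu g h]; group
    rw [this]; group
  show (ι (u (g * h)))⁻¹ * v (g * h) = _
  rw [e1, ← map_inv, e2]
  simp only [map_mul, map_inv]
  calc (ι (g • u h))⁻¹ * (ι (u g))⁻¹ * ι (f g h) * ((ι (f g h))⁻¹ * (v g * g • v h))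
      = (ι (g • u h))⁻¹ * (ι (u g))⁻¹ * v g * g • v h := by group
    _ = (ι (u g))⁻¹ * (ι (g • u h))⁻¹ * v g * g • v h := by
        rw [hcen' (g • u h) (ι (u g))⁻¹]
    _ = (ι (u g))⁻¹ * (v g * (ι (g • u h))⁻¹) * g • v h := by
        rw [mul_assoc ((ι (u g))⁻¹), hcen' (g • u h) (v g)]
    _ = (ι (u g))⁻¹ * v g * g • ((ι (u h))⁻¹ * v h) := by
        rw [smul_mul', smul_inv', ← hsmul]; group

/-- The central "difference" of two cocycles is a cocycle. -/
lemma aux_central_diff (ι : Z →* V) (hinj : Function.Injective ι)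
    (hcen : ∀ (z : Z) (x : V), ι z * x = x * ι z)
    (hsmul : ∀ (g : G) (z : Z), ι (g • z) = g • ι z)
    (c c' : G → V) (z : G → Z)
    (hc : IsCocycle c) (hc' : IsCocycle c')
    (hz : ∀ g, ι (z g) = c' g * (c g)⁻¹) : IsCocycle z := by
  intro g h
  apply hinj
  calc ι (z (g * h)) = c' (g * h) * (c (g * h))⁻¹ := hz _
    _ = c' g * g • c' h * (c g * g • c h)⁻¹ := by rw [hc g h, hc' g h]
    _ = c' g * (g • c' h * (g • c h)⁻¹) * (c g)⁻¹ := by rw [mul_inv_rev]; group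
    _ = c' g * ι (g • z h) * (c g)⁻¹ := by rw [hsmul, hz, smul_mul', smul_inv']
    _ = c' g * (c g)⁻¹ * ι (g • z h) := by rw [mul_assoc, hcen, ← mul_assoc]
    _ = ι (z g) * ι (g • z h) := by rw [hz]
    _ = ι (z g * g • z h) := by rw [map_mul]

/-- Twisting a cocycle by the inverse of a central cocycle gives a cocycle. -/
lemma aux_central_twist (ι : Z →* V)
    (hcen : ∀ (z : Z) (x : V), ι z * x = x * ι z)
    (hsmul : ∀ (g : G) (z : Z), ι (g • z) = g • ι z)
    (c : G → V) (z : G → Z) (hc : IsCocycle c) (hz : IsCocycle z) :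
    IsCocycle (fun g => (ι (z g))⁻¹ * c g) := by
  refine aux_central_correct ι hcen hsmul c (fun _ _ => 1) z (fun g h => ?_) (fun g h => ?_)
  · rw [map_one, one_mul, hc g h]
  · rw [hz g h]; group

lemma aux_pull (ι : Z →* V) (hcen : ∀ (z : Z) (x : V), ι z * x = x * ι z)
    (z : Z) (x y : V) : x * (ι z * y) = ι z * (x * y) := by
  rw [← mul_assoc, ← hcen, mul_assoc]

/-- Multiplication by a central subgroup, as a homomorphism from the product. -/
def centerMul (ι : Z →* V) (hcen : ∀ (z : Z) (x : V), ι z * x = x * ι z) :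
    Z × V →* V where
  toFun p := ι p.1 * p.2
  map_one' := by simp
  map_mul' p q := by
    show ι (p.1 * q.1) * (p.2 * q.2) = ι p.1 * p.2 * (ι q.1 * q.2)
    rw [map_mul, mul_assoc, mul_assoc]
    congr 1
    rw [← mul_assoc, hcen, mul_assoc]

lemma aux_conj (ι : Z →* V) (hcen : ∀ (z : Z) (x : V), ι z * x = x * ι z)
    (p p' : Z) (x y r : V) :
    (x * (ι p)⁻¹)⁻¹ * ((ι p)⁻¹ * ι p' * r) * (y * (ι p')⁻¹) = x⁻¹ * r * y := by
  set φ := centerMul ι hcen with hφ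
  have h1 : ∀ (z : Z) (a : V), a * (ι z)⁻¹ = φ (z⁻¹, a) := by
    intro z a
    show _ = ι z⁻¹ * a
    rw [← map_inv]
    exact (hcen _ _).symm
  have h2 : (ι p)⁻¹ * ι p' * r = φ (p⁻¹ * p', r) := by
    show _ = ι (p⁻¹ * p') * r
    rw [map_mul, map_inv]
  calc (x * (ι p)⁻¹)⁻¹ * ((ι p)⁻¹ * ι p' * r) * (y * (ι p')⁻¹)
      = (φ (p⁻¹, x))⁻¹ * φ (p⁻¹ * p', r) * φ (p'⁻¹, y) := by
        rw [h1 p x, h2, h1 p' y]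
    _ = φ ((p⁻¹, x)⁻¹ * (p⁻¹ * p', r) * (p'⁻¹, y)) := by
        rw [map_mul, map_mul, map_inv]
    _ = φ (1, x⁻¹ * r * y) := by
        congr 1
        rw [Prod.inv_mk, Prod.mk_mul_mk, Prod.mk_mul_mk, Prod.mk.injEq]
        constructor <;> group
    _ = x⁻¹ * r * y := by
        show ι 1 * _ = _
        rw [map_one, one_mul]

end Central

/-- Lifting through a central extension.  Let `1 → Z → V → V^ad → 1` be a central extension
of `G`-groups at an "integral" level (`Z₁ → V₁ → A₁`, modeling `Z̄_p`-points) and a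
"residual" level (`Z₀ → V₀ → A₀`, modeling `F̄_p`-points), with equivariant reduction maps
between them.  Assume `H²(G, Z₀) = 0` (every 2-cocycle is a coboundary), that reduction
`H¹(G, Z₁) → H¹(G, Z₀)` is surjective, and `H²(G, Z₁) = 0`.  If a non-abelian class
`c̄ ∈ H¹(G, V₀)` is such that its image in `H¹(G, A₀)` lifts to `H¹(G, A₁)`, then `c̄`
itself lifts to `H¹(G, V₁)`. -/
theorem stmt17 {G Z₁ V₁ A₁ Z₀ V₀ A₀ : Type*} [Group G]
    [CommGroup Z₁] [Group V₁] [Group A₁] [CommGroup Z₀] [Group V₀] [Group A₀]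
    [MulDistribMulAction G Z₁] [MulDistribMulAction G V₁] [MulDistribMulAction G A₁]
    [MulDistribMulAction G Z₀] [MulDistribMulAction G V₀] [MulDistribMulAction G A₀]
    (ι₁ : Z₁ →* V₁) (π₁ : V₁ →* A₁) (ι₀ : Z₀ →* V₀) (π₀ : V₀ →* A₀)
    (hι₁inj : Function.Injective ι₁) (hπ₁surj : Function.Surjective π₁)
    (hexact₁ : ι₁.range = π₁.ker)
    (hcentral₁ : ∀ z : Z₁, ι₁ z ∈ Subgroup.center V₁)
    (hι₀inj : Function.Injective ι₀) (hπ₀surj : Function.Surjective π₀)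
    (hexact₀ : ι₀.range = π₀.ker)
    (hcentral₀ : ∀ z : Z₀, ι₀ z ∈ Subgroup.center V₀)
    (hι₁eq : ∀ (g : G) (z : Z₁), ι₁ (g • z) = g • ι₁ z)
    (hπ₁eq : ∀ (g : G) (v : V₁), π₁ (g • v) = g • π₁ v)
    (hι₀eq : ∀ (g : G) (z : Z₀), ι₀ (g • z) = g • ι₀ z)
    (hπ₀eq : ∀ (g : G) (v : V₀), π₀ (g • v) = g • π₀ v)
    (rZ : Z₁ →* Z₀) (rV : V₁ →* V₀) (rA : A₁ →* A₀)
    (hrZeq : ∀ (g : G) (z : Z₁), rZ (g • z) = g • rZ z)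
    (hrVeq : ∀ (g : G) (v : V₁), rV (g • v) = g • rV v)
    (hrAeq : ∀ (g : G) (a : A₁), rA (g • a) = g • rA a)
    (hcomm₁ : ∀ z : Z₁, rV (ι₁ z) = ι₀ (rZ z))
    (hcomm₂ : ∀ v : V₁, rA (π₁ v) = π₀ (rV v))
    -- `H²(G, Z(F̄_p)) = 0`:
    (hH2Z₀ : ∀ f : G → G → Z₀, Is2Cocycle f → Is2Coboundary f)
    -- reduction is surjective on `H¹` of the center:
    (hH1surj : ∀ c₀ : G → Z₀, IsCocycle c₀ →
      ∃ c₁ : G → Z₁, IsCocycle c₁ ∧ Cohomologous (fun g => rZ (c₁ g)) c₀)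
    -- `H²(G, Z(Z̄_p)) = 0`:
    (hH2Z₁ : ∀ f : G → G → Z₁, Is2Cocycle f → Is2Coboundary f)
    (cbar : G → V₀) (hcbar : IsCocycle cbar)
    (hlift : ∃ a₁ : G → A₁, IsCocycle a₁ ∧
      Cohomologous (fun g => rA (a₁ g)) (fun g => π₀ (cbar g))) :
    ∃ c₁ : G → V₁, IsCocycle c₁ ∧ Cohomologous (fun g => rV (c₁ g)) cbar := by
  obtain ⟨a₁, ha₁, b₀, hb₀⟩ := hlift
  have hb₀' : ∀ g, π₀ (cbar g) = b₀⁻¹ * rA (a₁ g) * g • b₀ := hb₀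
  have hcen₁ : ∀ (z : Z₁) (x : V₁), ι₁ z * x = x * ι₁ z :=
    fun z x => (Subgroup.mem_center_iff.mp (hcentral₁ z) x).symm
  have hcen₀ : ∀ (z : Z₀) (x : V₀), ι₀ z * x = x * ι₀ z :=
    fun z x => (Subgroup.mem_center_iff.mp (hcentral₀ z) x).symm
  -- choose a set-theoretic lift of `a₁`
  choose v hv using fun g => hπ₁surj (a₁ g)
  -- its 2-cocycle obstruction, valued in `Z₁`
  have hF : ∀ g h : G, ∃ z : Z₁, ι₁ z = v g * g • v h * (v (g * h))⁻¹ := by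
    intro g h
    have : v g * g • v h * (v (g * h))⁻¹ ∈ ι₁.range := by
      rw [hexact₁, MonoidHom.mem_ker, map_mul, map_mul, map_inv, hπ₁eq, hv, hv, hv,
        ha₁ g h]
      group
    exact this
  choose f hf using hF
  have hv2 : ∀ g h : G, v g * g • v h = ι₁ (f g h) * v (g * h) := by
    intro g h; rw [hf g h]; group
  obtain ⟨u, hu⟩ := hH2Z₁ f (aux_central_2cocycle ι₁ hι₁inj hcen₁ hι₁eq v f hv2)
  -- corrected cocycle `c'` lifting `a₁`
  set c' : G → V₁ := fun g => (ι₁ (u g))⁻¹ * v g with hc'def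
  have hc' : IsCocycle c' := aux_central_correct ι₁ hcen₁ hι₁eq v f u hv2 hu
  have hπc' : ∀ g, π₁ (c' g) = a₁ g := by
    intro g
    have hk : π₁ (ι₁ (u g)) = 1 := by
      have : ι₁ (u g) ∈ π₁.ker := by rw [← hexact₁]; exact ⟨u g, rfl⟩
      exact this
    show π₁ ((ι₁ (u g))⁻¹ * v g) = a₁ g
    rw [map_mul, map_inv, hk, inv_one, one_mul, hv]
  have hX : IsCocycle (fun g => rV (c' g)) := aux_map_cocycle rV hrVeq hc'
  -- transport the cohomologous relation to `V₀`
  obtain ⟨β, hβ⟩ := hπ₀surj b₀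
  have ht : IsCocycle (fun g => β⁻¹ * rV (c' g) * g • β) := aux_twist_cocycle hX β
  have hπt : ∀ g, π₀ (β⁻¹ * rV (c' g) * g • β) = π₀ (cbar g) := by
    intro g
    have hXπ : π₀ (rV (c' g)) = rA (a₁ g) := by rw [← hcomm₂, hπc']
    rw [hb₀' g, map_mul, map_mul, map_inv, hπ₀eq, hβ, hXπ]
  -- the central difference with `cbar`
  have hkz : ∀ g, ∃ z : Z₀, ι₀ z = (β⁻¹ * rV (c' g) * g • β) * (cbar g)⁻¹ := by
    intro g
    have : (β⁻¹ * rV (c' g) * g • β) * (cbar g)⁻¹ ∈ ι₀.range := by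
      rw [hexact₀, MonoidHom.mem_ker, map_mul, map_inv, hπt g]
      group
    exact this
  choose z₀ hz₀ using hkz
  have hz₀c : IsCocycle z₀ :=
    aux_central_diff ι₀ hι₀inj hcen₀ hι₀eq cbar (fun g => β⁻¹ * rV (c' g) * g • β) z₀
      hcbar ht hz₀
  obtain ⟨z₁, hz₁c, w, hw⟩ := hH1surj z₀ hz₀c
  have hw' : ∀ g, z₀ g = w⁻¹ * rZ (z₁ g) * g • w := hw
  -- the final corrected lift
  refine ⟨fun g => (ι₁ (z₁ g))⁻¹ * c' g,
    aux_central_twist ι₁ hcen₁ hι₁eq c' z₁ hc' hz₁c, β * (ι₀ w)⁻¹, fun g => ?_⟩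
  have hXg : rV (c' g) = ι₀ (z₀ g) * (β * cbar g * (g • β)⁻¹) := by
    have h1 : β⁻¹ * rV (c' g) * g • β = ι₀ (z₀ g) * cbar g := by rw [hz₀ g]; group
    have h2 : rV (c' g) = β * (β⁻¹ * rV (c' g) * g • β) * (g • β)⁻¹ := by group
    rw [h2, h1, aux_pull ι₀ hcen₀ (z₀ g) β (cbar g), mul_assoc]
  have hmid : rV ((ι₁ (z₁ g))⁻¹ * c' g)
      = (ι₀ w)⁻¹ * ι₀ (g • w) * (β * cbar g * (g • β)⁻¹) := by
    rw [map_mul, map_inv, hcomm₁, hXg, ← mul_assoc, ← map_inv, ← map_mul,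
      ← map_inv ι₀ w, ← map_mul]
    congr 1
    rw [hw' g, mul_comm w⁻¹ (rZ (z₁ g))]
    group
  show cbar g = (β * (ι₀ w)⁻¹)⁻¹ * rV ((ι₁ (z₁ g))⁻¹ * c' g) * g • (β * (ι₀ w)⁻¹)
  rw [hmid, smul_mul', smul_inv', ← hι₀eq,
    aux_conj ι₀ hcen₀ w (g • w) β (g • β) (β * cbar g * (g • β)⁻¹)]
  group
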